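/- If Ψ : M(N,ℂ) → M(N,ℂ) is a linear positive operator with Ψ(I) = I, then for every matrix A ∈ M(N,ℂ), ‖Ψ(A)‖_F ≤ √N · ‖A‖_F, where ‖·‖_F is the Frobenius norm. -/

import Mathlib

open Matrix
open scoped ComplexOrder

/-- Frobenius norm of a complex matrix: `√(tr (A Aᴴ))`. -/
noncomputable def frobNorm {N : ℕ} (A : Matrix (Fin N) (Fin N) ℂ) : ℝ :=
  Real.sqrt (Matrix.trace (A * Aᴴ)).re

namespace FrobAux

variable {N : ℕ}

lemma herm_trace_sq {X : Matrix (Fin N) (Fin N) ℂ} (hX : X.IsHermitian) :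
    (Matrix.trace (X * Xᴴ)).re = ∑ i, (hX.eigenvalues i)^2 := by
  have hU : (star (hX.eigenvectorUnitary : Matrix (Fin N) (Fin N) ℂ)) *
      (hX.eigenvectorUnitary : Matrix (Fin N) (Fin N) ℂ) = 1 :=
    Matrix.mem_unitaryGroup_iff'.mp (hX.eigenvectorUnitary).2
  set U := (hX.eigenvectorUnitary : Matrix (Fin N) (Fin N) ℂ)
  set D : Matrix (Fin N) (Fin N) ℂ := diagonal (RCLike.ofReal ∘ hX.eigenvalues)
  have hspec : X = U * D * star U := hX.spectral_theorem
  have : X * Xᴴ = U * (D * D) * star U := by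
    rw [hX.eq]
    conv_lhs => rw [hspec]
    rw [show U * D * star U * (U * D * star U) = U * D * (star U * U) * D * star U by
      noncomm_ring, hU]
    noncomm_ring
  rw [this, Matrix.trace_mul_cycle, hU, one_mul]
  simp only [D, diagonal_mul_diagonal, trace_diagonal]
  rw [Complex.re_sum]
  refine Finset.sum_congr rfl fun i _ => ?_
  simp [sq]

lemma psd_smul_one_sub {X : Matrix (Fin N) (Fin N) ℂ} (hX : X.IsHermitian) {c : ℝ}
    (h : ∀ i, hX.eigenvalues i ≤ c) : ((c : ℂ) • 1 - X).PosSemidef := by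
  have hU : ((hX.eigenvectorUnitary : Matrix (Fin N) (Fin N) ℂ)) *
      star (hX.eigenvectorUnitary : Matrix (Fin N) (Fin N) ℂ) = 1 :=
    Matrix.mem_unitaryGroup_iff.mp (hX.eigenvectorUnitary).2
  set U := (hX.eigenvectorUnitary : Matrix (Fin N) (Fin N) ℂ)
  have key : (c : ℂ) • 1 - X
      = U * diagonal (fun i => ((c - hX.eigenvalues i : ℝ) : ℂ)) * Uᴴ := by
    have hspec : X = U * diagonal (RCLike.ofReal ∘ hX.eigenvalues) * star U :=
      hX.spectral_theorem
    have h1 : (c : ℂ) • (1 : Matrix (Fin N) (Fin N) ℂ) = U * ((c:ℂ) • 1) * star U := by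
      rw [Matrix.mul_smul, Matrix.smul_mul, mul_one, hU]
    have hdiag : (c:ℂ) • (1 : Matrix (Fin N) (Fin N) ℂ)
        - diagonal (RCLike.ofReal ∘ hX.eigenvalues)
        = diagonal (fun i => ((c - hX.eigenvalues i : ℝ) : ℂ)) := by
      rw [← Matrix.diagonal_one, ← Matrix.diagonal_smul, Matrix.diagonal_sub]
      ext i
      simp
    rw [← Matrix.star_eq_conjTranspose]
    conv_lhs => rw [hspec, h1]
    rw [← Matrix.sub_mul, ← Matrix.mul_sub, hdiag]
  rw [key]
  exact (Matrix.PosSemidef.diagonal (fun i => by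
    simpa using Complex.zero_le_real.mpr (sub_nonneg.mpr (h i)))).mul_mul_conjTranspose_same U

lemma psd_smul_one_add {X : Matrix (Fin N) (Fin N) ℂ} (hX : X.IsHermitian) {c : ℝ}
    (h : ∀ i, -c ≤ hX.eigenvalues i) : ((c : ℂ) • 1 + X).PosSemidef := by
  have hU : ((hX.eigenvectorUnitary : Matrix (Fin N) (Fin N) ℂ)) *
      star (hX.eigenvectorUnitary : Matrix (Fin N) (Fin N) ℂ) = 1 :=
    Matrix.mem_unitaryGroup_iff.mp (hX.eigenvectorUnitary).2
  set U := (hX.eigenvectorUnitary : Matrix (Fin N) (Fin N) ℂ)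
  have key : (c : ℂ) • 1 + X
      = U * diagonal (fun i => ((c + hX.eigenvalues i : ℝ) : ℂ)) * Uᴴ := by
    have hspec : X = U * diagonal (RCLike.ofReal ∘ hX.eigenvalues) * star U :=
      hX.spectral_theorem
    have h1 : (c : ℂ) • (1 : Matrix (Fin N) (Fin N) ℂ) = U * ((c:ℂ) • 1) * star U := by
      rw [Matrix.mul_smul, Matrix.smul_mul, mul_one, hU]
    have hdiag : (c:ℂ) • (1 : Matrix (Fin N) (Fin N) ℂ)
        + diagonal (RCLike.ofReal ∘ hX.eigenvalues)
        = diagonal (fun i => ((c + hX.eigenvalues i : ℝ) : ℂ)) := by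
      rw [← Matrix.diagonal_one, ← Matrix.diagonal_smul, Matrix.diagonal_add]
      ext i
      simp
    rw [← Matrix.star_eq_conjTranspose]
    conv_lhs => rw [hspec, h1]
    rw [← Matrix.add_mul, ← Matrix.mul_add, hdiag]
  rw [key]
  exact (Matrix.PosSemidef.diagonal (fun i => by
    simpa using Complex.zero_le_real.mpr (by linarith [h i] : (0:ℝ) ≤ c + hX.eigenvalues i))).mul_mul_conjTranspose_same U

lemma eig_le_of_psd {X : Matrix (Fin N) (Fin N) ℂ} (hX : X.IsHermitian) {c : ℝ}
    (h : ((c : ℂ) • 1 - X).PosSemidef) : ∀ i, hX.eigenvalues i ≤ c := by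
  intro i
  set v : Fin N → ℂ := ⇑(hX.eigenvectorBasis i) with hv
  have h2 := h.re_dotProduct_nonneg v
  have hmv : ((c : ℂ) • 1 - X) *ᵥ v = ((c : ℂ) - (hX.eigenvalues i : ℂ)) • v := by
    rw [Matrix.sub_mulVec, Matrix.smul_mulVec, one_mulVec, hX.mulVec_eigenvectorBasis,
      sub_smul]
    congr 1
  have hnorm : dotProduct (star v) v = 1 := by
    have h3 : (inner ℂ (hX.eigenvectorBasis i) (hX.eigenvectorBasis i) : ℂ)
        = dotProduct (star v) v :=
          (EuclideanSpace.inner_eq_star_dotProduct _ _).trans (dotProduct_comm _ _)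
    rw [← h3, inner_self_eq_norm_sq_to_K, hX.eigenvectorBasis.orthonormal.1 i]
    norm_num
  rw [hmv, dotProduct_smul, smul_eq_mul, hnorm, mul_one] at h2
  simpa using sub_nonneg.mp (by exact_mod_cast h2)

lemma eig_ge_of_psd {X : Matrix (Fin N) (Fin N) ℂ} (hX : X.IsHermitian) {c : ℝ}
    (h : ((c : ℂ) • 1 + X).PosSemidef) : ∀ i, -c ≤ hX.eigenvalues i := by
  intro i
  set v : Fin N → ℂ := ⇑(hX.eigenvectorBasis i) with hv
  have h2 := h.re_dotProduct_nonneg v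
  have hmv : ((c : ℂ) • 1 + X) *ᵥ v = ((c : ℂ) + (hX.eigenvalues i : ℂ)) • v := by
    rw [Matrix.add_mulVec, Matrix.smul_mulVec, one_mulVec, hX.mulVec_eigenvectorBasis,
      add_smul]
    congr 1
  have hnorm : dotProduct (star v) v = 1 := by
    have h3 : (inner ℂ (hX.eigenvectorBasis i) (hX.eigenvectorBasis i) : ℂ)
        = dotProduct (star v) v :=
          (EuclideanSpace.inner_eq_star_dotProduct _ _).trans (dotProduct_comm _ _)
    rw [← h3, inner_self_eq_norm_sq_to_K, hX.eigenvectorBasis.orthonormal.1 i]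
    norm_num
  rw [hmv, dotProduct_smul, smul_eq_mul, hnorm, mul_one] at h2
  have : (0:ℝ) ≤ c + hX.eigenvalues i := by exact_mod_cast h2
  linarith

/-- Key bound: positive unital map on a Hermitian matrix. -/
lemma key_bound (Ψ : Matrix (Fin N) (Fin N) ℂ →ₗ[ℂ] Matrix (Fin N) (Fin N) ℂ)
    (hpos : ∀ X : Matrix (Fin N) (Fin N) ℂ, X.PosSemidef → (Ψ X).PosSemidef)
    (hunital : Ψ 1 = 1) {H : Matrix (Fin N) (Fin N) ℂ} (hH : H.IsHermitian) :
    (Ψ H).IsHermitian ∧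
      (Matrix.trace (Ψ H * (Ψ H)ᴴ)).re ≤ N * (Matrix.trace (H * Hᴴ)).re := by
  set c : ℝ := Real.sqrt (∑ i, (hH.eigenvalues i)^2) with hc
  have hsum_nonneg : 0 ≤ ∑ i, (hH.eigenvalues i)^2 :=
    Finset.sum_nonneg fun i _ => sq_nonneg _
  have hc_nonneg : 0 ≤ c := Real.sqrt_nonneg _
  have hcsq : c^2 = ∑ i, (hH.eigenvalues i)^2 := Real.sq_sqrt hsum_nonneg
  have habs : ∀ i, |hH.eigenvalues i| ≤ c := by
    intro i
    refine abs_le_of_sq_le_sq ?_ hc_nonneg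
    rw [hcsq]
    exact Finset.single_le_sum (f := fun j => (hH.eigenvalues j)^2) (fun j _ => sq_nonneg _) (Finset.mem_univ i)
  have hP1 : ((c : ℂ) • 1 - H).PosSemidef :=
    psd_smul_one_sub hH fun i => (abs_le.mp (habs i)).2
  have hP2 : ((c : ℂ) • 1 + H).PosSemidef :=
    psd_smul_one_add hH fun i => (abs_le.mp (habs i)).1
  have hQ1 : ((c : ℂ) • 1 - Ψ H).PosSemidef := by
    have := hpos _ hP1
    rwa [map_sub, _root_.map_smul, hunital] at this
  have hQ2 : ((c : ℂ) • 1 + Ψ H).PosSemidef := by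
    have := hpos _ hP2
    rwa [map_add, _root_.map_smul, hunital] at this
  have hsmul_herm : ((c : ℂ) • (1 : Matrix (Fin N) (Fin N) ℂ)).IsHermitian := by
    rw [Matrix.IsHermitian, conjTranspose_smul, conjTranspose_one, Complex.star_def,
      Complex.conj_ofReal]
  have hherm : (Ψ H).IsHermitian := by
    have := hQ2.isHermitian.sub hsmul_herm
    simpa using this
  refine ⟨hherm, ?_⟩
  rw [herm_trace_sq hherm, herm_trace_sq hH, ← hcsq]
  have hbound : ∀ i, (hherm.eigenvalues i)^2 ≤ c^2 := by
    intro i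
    exact sq_le_sq' (eig_ge_of_psd hherm hQ2 i) (eig_le_of_psd hherm hQ1 i)
  calc ∑ i, (hherm.eigenvalues i)^2 ≤ ∑ _i : Fin N, c^2 :=
        Finset.sum_le_sum fun i _ => hbound i
    _ = N * c^2 := by simp [Finset.sum_const, nsmul_eq_mul]

lemma pythagoras {X Y : Matrix (Fin N) (Fin N) ℂ} (hX : X.IsHermitian) (hY : Y.IsHermitian) :
    (Matrix.trace ((X + Complex.I • Y) * (X + Complex.I • Y)ᴴ)).re
      = (Matrix.trace (X * Xᴴ)).re + (Matrix.trace (Y * Yᴴ)).re := by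
  have hct : (X + Complex.I • Y)ᴴ = X - Complex.I • Y := by
    rw [conjTranspose_add, conjTranspose_smul, hX.eq, hY.eq, Complex.star_def, Complex.conj_I]
    module
  have hexp : (X + Complex.I • Y) * (X - Complex.I • Y)
      = X * X + Y * Y + Complex.I • (Y * X - X * Y) := by
    simp only [Matrix.mul_sub, Matrix.add_mul, Matrix.smul_mul, Matrix.mul_smul, smul_smul,
      smul_add, smul_sub, Complex.I_mul_I, neg_one_smul, sub_neg_eq_add, neg_smul, one_smul,
      neg_neg]
    abel
  rw [hct, hexp, Matrix.trace_add, Matrix.trace_add, Matrix.trace_smul, Matrix.trace_sub,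
    Matrix.trace_mul_comm Y X, sub_self, smul_zero, add_zero, Complex.add_re, hX.eq, hY.eq]

end FrobAux

theorem positive_unital_frobenius_bound {N : ℕ}
    (Ψ : Matrix (Fin N) (Fin N) ℂ →ₗ[ℂ] Matrix (Fin N) (Fin N) ℂ)
    (hpos : ∀ X : Matrix (Fin N) (Fin N) ℂ, X.PosSemidef → (Ψ X).PosSemidef)
    (hunital : Ψ 1 = 1)
    (A : Matrix (Fin N) (Fin N) ℂ) :
    frobNorm (Ψ A) ≤ Real.sqrt N * frobNorm A := by
  set H1 : Matrix (Fin N) (Fin N) ℂ := (1/2 : ℂ) • (A + Aᴴ) with hH1def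
  set H2 : Matrix (Fin N) (Fin N) ℂ := (-(Complex.I)/2) • (A - Aᴴ) with hH2def
  have hH1 : H1.IsHermitian := by
    rw [Matrix.IsHermitian, hH1def, conjTranspose_smul, conjTranspose_add,
      conjTranspose_conjTranspose]
    rw [show star (1/2 : ℂ) = 1/2 by norm_num]
    module
  have hH2 : H2.IsHermitian := by
    rw [Matrix.IsHermitian, hH2def, conjTranspose_smul, conjTranspose_sub,
      conjTranspose_conjTranspose]
    rw [show star (-(Complex.I)/2 : ℂ) = Complex.I/2 by
      simp [Complex.star_def, Complex.conj_I]]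
    match_scalars <;> ring
  have hA : A = H1 + Complex.I • H2 := by
    rw [hH1def, hH2def]
    match_scalars <;> field_simp <;> norm_num [Complex.I_sq]
  have hPA : Ψ A = Ψ H1 + Complex.I • Ψ H2 := by
    conv_lhs => rw [hA]
    rw [map_add, _root_.map_smul, _root_.map_smul]
  obtain ⟨hX, hbX⟩ := FrobAux.key_bound Ψ hpos hunital hH1
  obtain ⟨hY, hbY⟩ := FrobAux.key_bound Ψ hpos hunital hH2
  unfold frobNorm
  rw [hPA, FrobAux.pythagoras hX hY]
  conv_rhs => rw [hA]
  rw [FrobAux.pythagoras hH1 hH2]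
  rw [show Real.sqrt N = Real.sqrt ((N:ℝ)) from rfl, ← Real.sqrt_mul (by positivity)]
  apply Real.sqrt_le_sqrt
  rw [mul_add]
  exact add_le_add hbX hbY
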